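/- For a density matrix ρ and a Hermitian matrix A, the Wigner-Yanase skew information I_ρ(A) = (1/2)Tr([√ρ, A]†[√ρ, A]) is nonnegative and bounded above by the variance V_ρ(A) = Tr(A²ρ) − (Tr(Aρ))². -/

import Mathlib

open Matrix
open scoped ComplexOrder

/-- The old Mathlib `Matrix.PosSemidef.sqrt` (removed upstream), with its original definition. -/
noncomputable def Matrix.PosSemidef.sqrt {n 𝕜 : Type*} [Fintype n] [DecidableEq n] [RCLike 𝕜]
    {A : Matrix n n 𝕜} (hA : A.PosSemidef) : Matrix n n 𝕜 :=
  (hA.1.eigenvectorUnitary : Matrix n n 𝕜) *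
    diagonal (fun i => ((Real.sqrt (hA.1.eigenvalues i) : ℝ) : 𝕜)) *
    (star hA.1.eigenvectorUnitary : Matrix n n 𝕜)

lemma Matrix.PosSemidef.posSemidef_sqrt {n 𝕜 : Type*} [Fintype n] [DecidableEq n] [RCLike 𝕜]
    {A : Matrix n n 𝕜} (hA : A.PosSemidef) : hA.sqrt.PosSemidef := by
  unfold Matrix.PosSemidef.sqrt
  rw [Matrix.star_eq_conjTranspose]
  refine Matrix.PosSemidef.mul_mul_conjTranspose_same ?_ _
  refine Matrix.PosSemidef.diagonal fun i => ?_
  simp only [Pi.zero_apply]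
  exact_mod_cast Real.sqrt_nonneg _

lemma Matrix.PosSemidef.sqrt_mul_self {n 𝕜 : Type*} [Fintype n] [DecidableEq n] [RCLike 𝕜]
    {A : Matrix n n 𝕜} (hA : A.PosSemidef) : hA.sqrt * hA.sqrt = A := by
  unfold Matrix.PosSemidef.sqrt
  have hU : (star hA.1.eigenvectorUnitary : Matrix n n 𝕜) * (hA.1.eigenvectorUnitary : Matrix n n 𝕜) = 1 :=
    Unitary.coe_star_mul_self _
  have hD : diagonal (fun i => ((Real.sqrt (hA.1.eigenvalues i) : ℝ) : 𝕜)) *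
      diagonal (fun i => ((Real.sqrt (hA.1.eigenvalues i) : ℝ) : 𝕜)) =
      diagonal (RCLike.ofReal ∘ hA.1.eigenvalues) := by
    rw [diagonal_mul_diagonal]
    congr 1; funext i
    simp only [Function.comp_apply]
    rw [← RCLike.ofReal_mul, Real.mul_self_sqrt (hA.eigenvalues_nonneg i)]
  conv_rhs => rw [hA.1.spectral_theorem]
  rw [Unitary.conjStarAlgAut_apply]
  calc _ = (hA.1.eigenvectorUnitary : Matrix n n 𝕜) * (diagonal (fun i => ((Real.sqrt (hA.1.eigenvalues i) : ℝ) : 𝕜)) *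
      ((star hA.1.eigenvectorUnitary : Matrix n n 𝕜) * (hA.1.eigenvectorUnitary : Matrix n n 𝕜)) * diagonal (fun i => ((Real.sqrt (hA.1.eigenvalues i) : ℝ) : 𝕜))) *
    (star hA.1.eigenvectorUnitary : Matrix n n 𝕜) := by simp only [Matrix.mul_assoc]
    _ = _ := by rw [hU, Matrix.mul_one, hD]

private noncomputable def matVec {d : ℕ} (X : Matrix (Fin d) (Fin d) ℂ) :
    EuclideanSpace ℂ (Fin d × Fin d) := WithLp.toLp 2 (fun p => X p.1 p.2)

private lemma trace_inner_eq {d : ℕ} (X Y : Matrix (Fin d) (Fin d) ℂ) :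
    (Xᴴ * Y).trace = inner (𝕜 := ℂ) (matVec X) (matVec Y) := by
  simp only [Matrix.trace, Matrix.diag_apply, Matrix.mul_apply, Matrix.conjTranspose_apply,
    PiLp.inner_apply, RCLike.inner_apply, Fintype.sum_prod_type, matVec]
  rw [Finset.sum_comm]; exact Finset.sum_congr rfl fun _ _ => Finset.sum_congr rfl fun _ _ => mul_comm _ _

private lemma trace_self_eq {d : ℕ} (X : Matrix (Fin d) (Fin d) ℂ) :
    (Xᴴ * X).trace = ((‖matVec X‖ ^ 2 : ℝ) : ℂ) := by
  rw [trace_inner_eq, inner_self_eq_norm_sq_to_K]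
  norm_cast

private lemma aux_bound {d : ℕ} (ρ A s q : Matrix (Fin d) (Fin d) ℂ)
    (hs : sᴴ = s) (hss : s * s = ρ) (hq : qᴴ = q) (hqq : q * q = s)
    (htr : ρ.trace = 1) (hA : Aᴴ = A) :
    (1 / 2 : ℂ) * ((s * A - A * s)ᴴ * (s * A - A * s)).trace ≤
      (A ^ 2 * ρ).trace - ((A * ρ).trace) ^ 2 := by
  set M := q * A * q with hMdef
  have hM : Mᴴ = M := by
    simp [hMdef, Matrix.conjTranspose_mul, hq, hA, Matrix.mul_assoc]
  have hC : (s * A - A * s)ᴴ = A * s - s * A := by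
    simp [Matrix.conjTranspose_sub, Matrix.conjTranspose_mul, hs, hA]
  have T1 : (A * s * (s * A)).trace = (A ^ 2 * ρ).trace := by
    have e : A * s * (s * A) = (A * ρ) * A := by rw [← hss]; noncomm_ring
    rw [e, Matrix.trace_mul_comm]
    congr 1
    rw [pow_two]; noncomm_ring
  have T4 : (s * A * (A * s)).trace = (A ^ 2 * ρ).trace := by
    rw [Matrix.trace_mul_comm (s * A) (A * s), T1]
  have T2 : (A * s * (A * s)).trace = (s * A * (s * A)).trace := by
    rw [Matrix.mul_assoc, Matrix.trace_mul_comm A]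
    congr 1; noncomm_ring
  have expand : ((s * A - A * s)ᴴ * (s * A - A * s)).trace
      = 2 * (A ^ 2 * ρ).trace - 2 * (s * A * (s * A)).trace := by
    rw [hC]
    have e : (A * s - s * A) * (s * A - A * s)
        = A * s * (s * A) - A * s * (A * s) - s * A * (s * A) + s * A * (A * s) := by
      noncomm_ring
    rw [e, Matrix.trace_add, Matrix.trace_sub, Matrix.trace_sub, T1, T2, T4]
    ring
  have hMM : (Mᴴ * M).trace = (s * A * (s * A)).trace := by
    rw [hM]
    have e : M * M = q * (A * s * A * q) := by
      simp only [hMdef, ← hqq]; noncomm_ring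
    rw [e, Matrix.trace_mul_comm q]
    have e2 : A * s * A * q * q = (A * s * A) * (q * q) := by noncomm_ring
    rw [e2, hqq, Matrix.trace_mul_comm]
    congr 1; noncomm_ring
  have htm : (A * ρ).trace = (sᴴ * M).trace := by
    have e : M * s = (q * A) * (q * (q * q)) := by
      simp only [hMdef, ← hqq]; noncomm_ring
    have e2 : (q * (q * q)) * (q * A) = ρ * A := by
      rw [← hss, ← hqq]; noncomm_ring
    rw [hs, Matrix.trace_mul_comm s M, e, Matrix.trace_mul_comm (q * A), e2]
    exact Matrix.trace_mul_comm A ρ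
  have key : ((A * ρ).trace) ^ 2 ≤ (s * A * (s * A)).trace := by
    have hti : (A * ρ).trace = inner (𝕜 := ℂ) (matVec s) (matVec M) := by
      rw [htm, trace_inner_eq]
    have hns : ‖matVec s‖ ^ 2 = 1 := by
      have h := (trace_self_eq s).symm.trans (by rw [hs, hss, htr] :
        (sᴴ * s).trace = (1 : ℂ))
      exact_mod_cast h
    have htr2 : (s * A * (s * A)).trace = ((‖matVec M‖ ^ 2 : ℝ) : ℂ) := by
      rw [← hMM, trace_self_eq]
    have hreal : (starRingEnd ℂ) ((A * ρ).trace) = (A * ρ).trace := by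
      calc (starRingEnd ℂ) ((A * ρ).trace)
          = (starRingEnd ℂ) (inner (𝕜 := ℂ) (matVec s) (matVec M)) := by rw [hti]
        _ = inner (𝕜 := ℂ) (matVec M) (matVec s) := inner_conj_symm _ _
        _ = (Mᴴ * s).trace := (trace_inner_eq M s).symm
        _ = (s * M).trace := by rw [hM, Matrix.trace_mul_comm]
        _ = (A * ρ).trace := by rw [← hs, ← htm]
    obtain ⟨r, hr⟩ : ∃ r : ℝ, (A * ρ).trace = (r : ℂ) :=
      ⟨((A * ρ).trace).re, (Complex.conj_eq_iff_re.mp hreal).symm ▸ rfl⟩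
    have hsq : ((A * ρ).trace) ^ 2 = ((‖(A * ρ).trace‖ ^ 2 : ℝ) : ℂ) := by
      rw [hr, Complex.norm_real, Real.norm_eq_abs, sq_abs]
      push_cast
      ring
    rw [hsq, htr2]
    refine Complex.real_le_real.mpr ?_
    calc ‖(A * ρ).trace‖ ^ 2 = ‖inner (𝕜 := ℂ) (matVec s) (matVec M)‖ ^ 2 := by rw [hti]
      _ ≤ (‖matVec s‖ * ‖matVec M‖) ^ 2 := by
          have h := norm_inner_le_norm (𝕜 := ℂ) (matVec s) (matVec M)
          exact pow_le_pow_left₀ (norm_nonneg _) h 2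
      _ = ‖matVec s‖ ^ 2 * ‖matVec M‖ ^ 2 := by ring
      _ = ‖matVec M‖ ^ 2 := by rw [hns, one_mul]
  rw [expand]
  have e : (1/2 : ℂ) * (2 * (A ^ 2 * ρ).trace - 2 * (s * A * (s * A)).trace)
      = (A ^ 2 * ρ).trace - (s * A * (s * A)).trace := by ring
  rw [e]
  exact sub_le_sub_left key _

theorem stmt1 {d : ℕ} (ρ A : Matrix (Fin d) (Fin d) ℂ)
    (hρ : ρ.PosSemidef) (htr : ρ.trace = 1) (hA : A.IsHermitian) :
    (0 : ℂ) ≤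
        (1 / 2 : ℂ) * ((hρ.sqrt * A - A * hρ.sqrt)ᴴ * (hρ.sqrt * A - A * hρ.sqrt)).trace ∧
      (1 / 2 : ℂ) * ((hρ.sqrt * A - A * hρ.sqrt)ᴴ * (hρ.sqrt * A - A * hρ.sqrt)).trace ≤
        (A ^ 2 * ρ).trace - ((A * ρ).trace) ^ 2 := by
  constructor
  · have h1 : (0:ℂ) ≤ ((hρ.sqrt * A - A * hρ.sqrt)ᴴ * (hρ.sqrt * A - A * hρ.sqrt)).trace := by
      unfold Matrix.trace
      refine Finset.sum_nonneg fun i _ => ?_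
      simp only [diag_apply, mul_apply, conjTranspose_apply]
      exact Finset.sum_nonneg fun j _ => star_mul_self_nonneg _
    have h2 : (0:ℂ) ≤ (1/2 : ℂ) := by
      rw [Complex.le_def]; norm_num
    exact mul_nonneg h2 h1
  · exact aux_bound ρ A hρ.sqrt hρ.posSemidef_sqrt.sqrt
      hρ.posSemidef_sqrt.1 hρ.sqrt_mul_self
      hρ.posSemidef_sqrt.posSemidef_sqrt.1 hρ.posSemidef_sqrt.sqrt_mul_self
      htr hA.eq
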